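/- Let m ≥ 2, p > 1, and U = {ξ ∈ ℝ^m_+ : ‖ξ‖_p ≤ 1} be the nonnegative p-norm ball. Set μ = 2^{1/p}·(2(m−1)+2^p)^{−1/p²}·p^{−1}·(p−1)^{1/p + (1−1/p)²} and ρ = 2^{1/p − 1}·(2(m−1)+2^p)^{1/p − 1/p²}·p^{−1}·(p−1)^{(1−1/p)²}, and let v_0 = μ·e, v_i = v_0 + ρ·e_i. Then: (i) for every ξ ∈ U, Σ_{i=1}^m (ξ_i − μ)_+ ≤ ρ, so Û = conv(v_0,…,v_m) dominates U; and (ii) the scaling factor β defined by β^p = (m−1)·μ^p + (μ+ρ)^p (so that (1/β)·v_i ∈ U for all i) satisfies β ≤ (2(m−1) + 2^p)^{1/p − 1/p²}·p^{1/p − 1}·(p−1)^{(1−1/p)²}. -/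

import Mathlib

open Real

private lemma conv2 {p : ℝ} (hp : 1 ≤ p) {a b : ℝ} (ha : 0 ≤ a) (hb : 0 ≤ b) :
    (a + b) ^ p ≤ 2 ^ (p - 1) * (a ^ p + b ^ p) := by
  have h := NNReal.rpow_add_le_mul_rpow_add_rpow a.toNNReal b.toNNReal hp
  have h2 := NNReal.coe_le_coe.2 h
  push_cast [Real.coe_toNNReal a ha, Real.coe_toNNReal b hb] at h2
  exact h2

set_option maxHeartbeats 1000000 in
theorem stmt12 {m : ℕ} (hm : 2 ≤ m) (p : ℝ) (hp : 1 < p) :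
    let U : Set (Fin m → ℝ) :=
      {ξ | (∀ i, 0 ≤ ξ i) ∧ (∑ i, |ξ i| ^ p) ^ (1 / p) ≤ 1}
    let μ : ℝ := 2 ^ (1 / p) * (2 * ((m : ℝ) - 1) + 2 ^ p) ^ (-(1 / p ^ 2)) * p⁻¹ *
      (p - 1) ^ (1 / p + (1 - 1 / p) ^ 2)
    let ρ : ℝ := 2 ^ (1 / p - 1) * (2 * ((m : ℝ) - 1) + 2 ^ p) ^ (1 / p - 1 / p ^ 2) * p⁻¹ *
      (p - 1) ^ ((1 - 1 / p) ^ 2)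
    let v : Option (Fin m) → Fin m → ℝ :=
      fun o => o.elim (fun _ => μ) (fun i => (fun _ => μ) + ρ • (Pi.single i (1 : ℝ) : Fin m → ℝ))
    let h : (Fin m → ℝ) → Fin m → ℝ := fun ξ i => max (ξ i - μ) 0 + μ
    ∀ β : ℝ, 0 ≤ β → β ^ p = ((m : ℝ) - 1) * μ ^ p + (μ + ρ) ^ p →
      -- (i)
      (∀ ξ ∈ U, (∑ i, max (ξ i - μ) 0) ≤ ρ) ∧
      (∀ ξ ∈ U, (∀ i, ξ i ≤ h ξ i) ∧ h ξ ∈ convexHull ℝ (Set.range v)) ∧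
      -- (ii)
      (∀ i, β⁻¹ • v i ∈ U) ∧
      β ≤ (2 * ((m : ℝ) - 1) + 2 ^ p) ^ (1 / p - 1 / p ^ 2) * p ^ (1 / p - 1) *
        (p - 1) ^ ((1 - 1 / p) ^ 2) := by
  intro U μ ρ v h β hβ0 hβp
  have hp0 : (0:ℝ) < p := lt_trans one_pos hp
  have hp1 : (0:ℝ) < p - 1 := by linarith
  have hm1 : (1:ℝ) ≤ (m:ℝ) - 1 := by
    have : (2:ℝ) ≤ (m:ℝ) := by exact_mod_cast hm
    linarith
  set A : ℝ := 2 * ((m : ℝ) - 1) + 2 ^ p with hA_def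
  have hA : 0 < A := by
    have h2p : (0:ℝ) < (2:ℝ) ^ p := Real.rpow_pos_of_pos two_pos p
    rw [hA_def]; linarith
  have hμ_def : μ = 2 ^ (1/p) * A ^ (-(1/p^2)) * p⁻¹ * (p-1) ^ (1/p + (1-1/p)^2) := rfl
  have hρ_def : ρ = 2 ^ (1/p - 1) * A ^ (1/p - 1/p^2) * p⁻¹ * (p-1) ^ ((1-1/p)^2) := rfl
  have hμ : 0 < μ := by
    rw [hμ_def]
    exact mul_pos (mul_pos (mul_pos (rpow_pos_of_pos two_pos _) (rpow_pos_of_pos hA _))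
      (inv_pos.2 hp0)) (rpow_pos_of_pos hp1 _)
  have hρ : 0 < ρ := by
    rw [hρ_def]
    exact mul_pos (mul_pos (mul_pos (rpow_pos_of_pos two_pos _) (rpow_pos_of_pos hA _))
      (inv_pos.2 hp0)) (rpow_pos_of_pos hp1 _)
  set l2 := Real.log 2 with hl2
  set lA := Real.log A with hlA
  set lp := Real.log p with hlp
  set lq := Real.log (p-1) with hlq
  have hlμ : Real.log μ = (1/p) * l2 - (1/p^2) * lA - lp + (1/p + (1-1/p)^2) * lq := by
    rw [hμ_def, Real.log_mul (by positivity) (rpow_pos_of_pos hp1 _).ne',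
      Real.log_mul (by positivity) (inv_pos.2 hp0).ne',
      Real.log_mul (rpow_pos_of_pos two_pos _).ne' (rpow_pos_of_pos hA _).ne',
      Real.log_rpow two_pos, Real.log_rpow hA, Real.log_rpow hp1, Real.log_inv]
    ring
  have hlρ : Real.log ρ = (1/p - 1) * l2 + (1/p - 1/p^2) * lA - lp + ((1-1/p)^2) * lq := by
    rw [hρ_def, Real.log_mul (by positivity) (rpow_pos_of_pos hp1 _).ne',
      Real.log_mul (by positivity) (inv_pos.2 hp0).ne',
      Real.log_mul (rpow_pos_of_pos two_pos _).ne' (rpow_pos_of_pos hA _).ne',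
      Real.log_rpow two_pos, Real.log_rpow hA, Real.log_rpow hp1, Real.log_inv]
    ring
  -- key identity
  have hXpos : (0:ℝ) < (p * ρ) ^ ((p-1)⁻¹) := rpow_pos_of_pos (mul_pos hp0 hρ) _
  have E1 : μ * (p/(p-1)) * (p * ρ) ^ ((p-1)⁻¹) = 1 := by
    have hpos : (0:ℝ) < μ * (p/(p-1)) * (p * ρ) ^ ((p-1)⁻¹) :=
      mul_pos (mul_pos hμ (div_pos hp0 hp1)) hXpos
    have hlog : Real.log (μ * (p/(p-1)) * (p * ρ) ^ ((p-1)⁻¹)) = 0 := by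
      rw [Real.log_mul (mul_pos hμ (div_pos hp0 hp1)).ne' hXpos.ne',
        Real.log_mul hμ.ne' (div_pos hp0 hp1).ne',
        Real.log_div hp0.ne' hp1.ne',
        Real.log_rpow (mul_pos hp0 hρ),
        Real.log_mul hp0.ne' hρ.ne', hlμ, hlρ]
      field_simp [hp0.ne', hp1.ne']
      ring
    rw [← Real.exp_log hpos, hlog, Real.exp_zero]
  -- pointwise key inequality
  have key : ∀ t : ℝ, 0 ≤ t → t - μ ≤ ρ * t ^ p := by
    intro t ht
    have hconj : p.HolderConjugate (p/(p-1)) := (Real.holderConjugate_iff_eq_conjExponent hp).2 rfl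
    set c : ℝ := (p * ρ) ^ p⁻¹ with hc_def
    have hc : 0 < c := rpow_pos_of_pos (mul_pos hp0 hρ) _
    have hy := Real.young_inequality_of_nonneg (mul_nonneg ht hc.le) (inv_nonneg.2 hc.le) hconj
    rw [mul_assoc, mul_inv_cancel₀ hc.ne', mul_one] at hy
    rw [Real.mul_rpow ht hc.le, Real.inv_rpow hc.le] at hy
    have hcp : c ^ p = p * ρ := by
      rw [hc_def, ← Real.rpow_mul (mul_pos hp0 hρ).le, inv_mul_cancel₀ hp0.ne', Real.rpow_one]
    have hcq : c ^ (p/(p-1)) = (p * ρ) ^ ((p-1)⁻¹) := by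
      rw [hc_def, ← Real.rpow_mul (mul_pos hp0 hρ).le]
      congr 1
      field_simp
    rw [hcp, hcq] at hy
    have hμeq : ((p * ρ) ^ ((p-1)⁻¹))⁻¹ / (p/(p-1)) = μ := by
      have h1 : μ * (p/(p-1)) = ((p * ρ) ^ ((p-1)⁻¹))⁻¹ := eq_inv_of_mul_eq_one_left E1
      rw [← h1, mul_div_assoc, div_self (div_pos hp0 hp1).ne', mul_one]
    rw [hμeq] at hy
    have : t ^ p * (p * ρ) / p = ρ * t ^ p := by field_simp
    rw [this] at hy
    linarith
  -- part (i) sum bound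
  have sum_le : ∀ ξ ∈ U, (∑ i, max (ξ i - μ) 0) ≤ ρ := by
    intro ξ hξ
    obtain ⟨hnn, hnorm⟩ := hξ
    have hsum1 : (∑ i, |ξ i| ^ p) ≤ 1 := by
      by_contra hlt
      push_neg at hlt
      have hps : (0:ℝ) < 1/p := by positivity
      have h1 : (1:ℝ) < (∑ i, |ξ i| ^ p) ^ (1/p) := by
        calc (1:ℝ) = 1 ^ (1/p) := (Real.one_rpow _).symm
        _ < _ := Real.rpow_lt_rpow (by norm_num) hlt hps
      linarith
    calc ∑ i, max (ξ i - μ) 0 ≤ ∑ i, ρ * |ξ i| ^ p := by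
          apply Finset.sum_le_sum
          intro i _
          rw [abs_of_nonneg (hnn i)]
          exact max_le (key (ξ i) (hnn i)) (mul_nonneg hρ.le (rpow_nonneg (hnn i) p))
      _ = ρ * ∑ i, |ξ i| ^ p := by rw [Finset.mul_sum]
      _ ≤ ρ * 1 := mul_le_mul_of_nonneg_left hsum1 hρ.le
      _ = ρ := mul_one ρ
  -- coordinates of v
  have hvsome : ∀ (i j : Fin m), v (some i) j = μ + ρ * (if j = i then 1 else 0) := by
    intro i j
    simp [v, Pi.single_apply]
  have hvnn : ∀ o j, 0 ≤ v o j := by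
    intro o j
    cases o with
    | none => exact hμ.le
    | some i =>
      rw [hvsome i j]
      by_cases hji : j = i <;> simp [hji] <;> linarith
  refine ⟨sum_le, ?_, ?_, ?_⟩
  · -- domination
    intro ξ hξ
    obtain ⟨hnn, hnorm⟩ := hξ
    constructor
    · intro i
      show ξ i ≤ max (ξ i - μ) 0 + μ
      have := le_max_left (ξ i - μ) 0
      linarith
    · set w : Fin m → ℝ := fun i => max (ξ i - μ) 0 / ρ with hw_def
      have hw0 : ∀ i, 0 ≤ w i := fun i => div_nonneg (le_max_right _ _) hρ.le
      have hwsum : ∑ i, w i ≤ 1 := by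
        have h1 : ∑ i, w i = (∑ i, max (ξ i - μ) 0) / ρ := by
          rw [Finset.sum_div]
        rw [h1, div_le_one hρ]
        exact sum_le ξ ⟨hnn, hnorm⟩
      have hrepr : h ξ = ∑ o : Option (Fin m), (o.elim (1 - ∑ i, w i) w) • v o := by
        funext j
        rw [Finset.sum_apply, Fintype.sum_option]
        simp only [Option.elim_none, Option.elim_some, Pi.smul_apply, smul_eq_mul]
        have hvn : v none j = μ := rfl
        rw [hvn]
        have hsum2 : ∑ i : Fin m, w i * v (some i) j = (∑ i, w i) * μ + ρ * w j := by
          have step : ∀ i ∈ Finset.univ, w i * v (some i) j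
              = w i * μ + (if j = i then ρ * w i else 0) := by
            intro i _
            rw [hvsome i j]
            split <;> ring
          rw [Finset.sum_congr rfl step, Finset.sum_add_distrib,
            Finset.sum_ite_eq Finset.univ j (fun i => ρ * w i), ← Finset.sum_mul]
          simp
        rw [hsum2]
        have hwj : ρ * w j = max (ξ j - μ) 0 := by
          show ρ * (max (ξ j - μ) 0 / ρ) = max (ξ j - μ) 0
          rw [mul_comm, div_mul_cancel₀ _ hρ.ne']
        rw [hwj]
        show max (ξ j - μ) 0 + μ = _
        ring
      rw [hrepr]
      apply (convex_convexHull ℝ (Set.range v)).sum_mem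
      · intro o _
        cases o with
        | none =>
          show (0:ℝ) ≤ 1 - ∑ i, w i
          linarith
        | some i => exact hw0 i
      · rw [Fintype.sum_option]
        show (1 - ∑ i, w i) + ∑ i, w i = 1
        ring
      · intro o _
        exact subset_convexHull ℝ _ (Set.mem_range_self o)
  · -- membership of scaled vertices
    have hβpos : 0 < β := by
      rcases hβ0.eq_or_lt with hb | hb
      · exfalso
        rw [← hb, Real.zero_rpow hp0.ne'] at hβp
        have h1 : (0:ℝ) < μ ^ p := rpow_pos_of_pos hμ p
        have h2 : (0:ℝ) < (μ + ρ) ^ p := rpow_pos_of_pos (by linarith) p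
        nlinarith
      · exact hb
    have hβp_pos : 0 < β ^ p := rpow_pos_of_pos hβpos p
    have hSnone : ∑ j, (v none j) ^ p = (m:ℝ) * μ ^ p := by
      have : ∀ j : Fin m, (v none j) ^ p = μ ^ p := fun j => rfl
      rw [Finset.sum_congr rfl (fun j (_ : j ∈ Finset.univ) => this j), Finset.sum_const,
        Finset.card_univ, Fintype.card_fin, nsmul_eq_mul]
    have hSsome : ∀ i : Fin m, ∑ j, (v (some i) j) ^ p = ((m:ℝ)-1) * μ ^ p + (μ+ρ) ^ p := by
      intro i
      have step : ∀ j : Fin m,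
          (v (some i) j) ^ p = μ ^ p + (if j = i then (μ+ρ) ^ p - μ ^ p else 0) := by
        intro j
        rw [hvsome i j]
        by_cases hji : j = i <;> simp [hji]
      rw [Finset.sum_congr rfl (fun j (_ : j ∈ Finset.univ) => step j), Finset.sum_add_distrib,
        Finset.sum_ite_eq' Finset.univ i (fun _ => (μ+ρ) ^ p - μ ^ p), Finset.sum_const,
        Finset.card_univ, Fintype.card_fin, nsmul_eq_mul]
      simp only [Finset.mem_univ, if_true]
      ring
    intro o
    constructor
    · intro j
      exact mul_nonneg (inv_nonneg.2 hβ0) (hvnn o j)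
    · have hterm : ∀ j, |(β⁻¹ • v o) j| ^ p = (β ^ p)⁻¹ * (v o j) ^ p := by
        intro j
        have h1 : (β⁻¹ • v o) j = β⁻¹ * v o j := rfl
        rw [h1, abs_of_nonneg (mul_nonneg (inv_nonneg.2 hβ0) (hvnn o j)),
          Real.mul_rpow (inv_nonneg.2 hβ0) (hvnn o j), Real.inv_rpow hβ0]
      rw [Finset.sum_congr rfl (fun j (_ : j ∈ Finset.univ) => hterm j), ← Finset.mul_sum]
      have hS_nonneg : 0 ≤ ∑ j, (v o j) ^ p :=
        Finset.sum_nonneg fun j _ => rpow_nonneg (hvnn o j) p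
      have hle : (β ^ p)⁻¹ * (∑ j, (v o j) ^ p) ≤ 1 := by
        rw [inv_mul_eq_div, div_le_one hβp_pos]
        cases o with
        | none =>
          rw [hSnone, hβp]
          have hmono : μ ^ p ≤ (μ + ρ) ^ p := rpow_le_rpow hμ.le (by linarith) hp0.le
          have hsplit : (m:ℝ) * μ ^ p = ((m:ℝ)-1) * μ ^ p + μ ^ p := by ring
          linarith
        | some i => exact le_of_eq (by rw [hSsome i, hβp])
      exact Real.rpow_le_one (mul_nonneg (inv_nonneg.2 hβp_pos.le) hS_nonneg) hle (by positivity)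
  · -- β bound
    set T : ℝ := A ^ (1/p - 1/p^2) * p ^ (1/p - 1) * (p-1) ^ ((1-1/p)^2) with hT_def
    have hT0 : 0 < T :=
      mul_pos (mul_pos (rpow_pos_of_pos hA _) (rpow_pos_of_pos hp0 _)) (rpow_pos_of_pos hp1 _)
    have hlT : Real.log T = (1/p - 1/p^2) * lA + (1/p - 1) * lp + (1-1/p)^2 * lq := by
      rw [hT_def, Real.log_mul (mul_pos (rpow_pos_of_pos hA _) (rpow_pos_of_pos hp0 _)).ne'
        (rpow_pos_of_pos hp1 _).ne',
        Real.log_mul (rpow_pos_of_pos hA _).ne' (rpow_pos_of_pos hp0 _).ne',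
        Real.log_rpow hA, Real.log_rpow hp0, Real.log_rpow hp1]
    have hTp : T ^ p = ρ ^ p * p * 2 ^ (p-1) := by
      have hr : 0 < ρ ^ p * p * 2 ^ (p-1) :=
        mul_pos (mul_pos (rpow_pos_of_pos hρ _) hp0) (rpow_pos_of_pos two_pos _)
      have hlg : Real.log (T ^ p) = Real.log (ρ ^ p * p * 2 ^ (p-1)) := by
        rw [Real.log_rpow hT0,
          Real.log_mul (mul_pos (rpow_pos_of_pos hρ p) hp0).ne' (rpow_pos_of_pos two_pos _).ne',
          Real.log_mul (rpow_pos_of_pos hρ p).ne' hp0.ne',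
          Real.log_rpow hρ, Real.log_rpow two_pos, hlT, hlρ]
        field_simp [hp0.ne', hp1.ne']
        ring
      calc T ^ p = Real.exp (Real.log (T ^ p)) := (Real.exp_log (rpow_pos_of_pos hT0 p)).symm
        _ = ρ ^ p * p * 2 ^ (p-1) := by rw [hlg, Real.exp_log hr]
    have hμp : μ ^ p = 2 ^ p * (p-1) / A * ρ ^ p := by
      have hr : 0 < 2 ^ p * (p-1) / A * ρ ^ p :=
        mul_pos (div_pos (mul_pos (rpow_pos_of_pos two_pos p) hp1) hA) (rpow_pos_of_pos hρ p)
      have hlg : Real.log (μ ^ p) = Real.log (2 ^ p * (p-1) / A * ρ ^ p) := by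
        rw [Real.log_rpow hμ,
          Real.log_mul (div_pos (mul_pos (rpow_pos_of_pos two_pos p) hp1) hA).ne'
            (rpow_pos_of_pos hρ p).ne',
          Real.log_div (mul_pos (rpow_pos_of_pos two_pos p) hp1).ne' hA.ne',
          Real.log_mul (rpow_pos_of_pos two_pos p).ne' hp1.ne',
          Real.log_rpow two_pos, Real.log_rpow hρ, hlμ, hlρ]
        field_simp [hp0.ne', hp1.ne']
        ring
      calc μ ^ p = Real.exp (Real.log (μ ^ p)) := (Real.exp_log (rpow_pos_of_pos hμ p)).symm
        _ = _ := by rw [hlg, Real.exp_log hr]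
    have h2half : (2:ℝ) ^ (p-1) = 2 ^ p / 2 := by
      rw [Real.rpow_sub two_pos, Real.rpow_one]
    have hβT : β ^ p ≤ T ^ p := by
      rw [hβp, hTp]
      have hcv := conv2 hp.le hμ.le hρ.le
      have hμp_nn : (0:ℝ) ≤ μ ^ p := (rpow_pos_of_pos hμ p).le
      calc ((m:ℝ)-1) * μ ^ p + (μ+ρ) ^ p
          ≤ ((m:ℝ)-1) * μ ^ p + 2 ^ (p-1) * (μ ^ p + ρ ^ p) := by linarith
        _ = (((m:ℝ)-1) + 2 ^ (p-1)) * μ ^ p + 2 ^ (p-1) * ρ ^ p := by ring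
        _ = ((2 * ((m:ℝ)-1) + 2 ^ p)/2) * (2 ^ p * (p-1) / A * ρ ^ p) + (2 ^ p / 2) * ρ ^ p := by
            rw [hμp, h2half]; ring
        _ = ρ ^ p * p * 2 ^ (p-1) := by
            rw [h2half, ← hA_def]
            field_simp
            ring
    exact (Real.rpow_le_rpow_iff hβ0 hT0.le hp0).1 hβT
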